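/- Let γ > 0, let 0 < λ < λ₀ < ∞, let −∞ < L₁ ≤ L₂ < ∞, and let f, f¹, f², … : ℝ → ℝ be increasing functions, each equal to 0 on (−∞, L₁) and equal to 1 on (L₂, ∞), with ‖fⁱ − f‖_{L^∞(ℝ)} → 0 as i → ∞. Then λ ν_γ({(x,y) : |f(x)−f(y)| ≥ λ₀ |x−y|^{1+γ}}) ≥ limsup_{i→∞} λ ν_γ({(x,y) : |fⁱ(x)−fⁱ(y)| ≥ λ₀ |x−y|^{1+γ}}), and consequently F_{γ,λ}(f,ℝ) ≥ limsup_{i→∞} λ ν_γ({(x,y) : |fⁱ(x)−fⁱ(y)| ≥ λ₀ |x−y|^{1+γ}}). -/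

import Mathlib

open MeasureTheory Filter Set
open scoped ENNReal Topology

/-- The measure `ν_γ` on `ℝ × ℝ`: `ν_γ(A) = ∬_A |x - y|^(γ-1) dy dx`. -/
noncomputable def nuG (γ : ℝ) (A : Set (ℝ × ℝ)) : ℝ≥0∞ :=
  ∫⁻ p in A, ENNReal.ofReal (|p.1 - p.2| ^ (γ - 1))

/-- The set `E_{γ,λ}(f,Ω) = {(x,y) ∈ Ω × Ω : |f(x) - f(y)| > λ |x - y|^(1+γ)}`. -/
def EG (γ lam : ℝ) (f : ℝ → ℝ) (Ω : Set ℝ) : Set (ℝ × ℝ) :=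
  {p | p.1 ∈ Ω ∧ p.2 ∈ Ω ∧ lam * |p.1 - p.2| ^ (1 + γ) < |f p.1 - f p.2|}

/-- The functional `F_{γ,λ}(f,Ω) = λ ν_γ(E_{γ,λ}(f,Ω))`. -/
noncomputable def FG (γ lam : ℝ) (f : ℝ → ℝ) (Ω : Set ℝ) : ℝ≥0∞ :=
  ENNReal.ofReal lam * nuG γ (EG γ lam f Ω)


lemma nuG_mono {γ : ℝ} {A B : Set (ℝ × ℝ)} (h : A ⊆ B) : nuG γ A ≤ nuG γ B :=
  lintegral_mono_set h

lemma nuG_union_le (γ : ℝ) (A B : Set (ℝ × ℝ)) : nuG γ (A ∪ B) ≤ nuG γ A + nuG γ B :=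
  lintegral_union_le _ _ _

lemma nuG_diag (γ : ℝ) : nuG γ {p : ℝ × ℝ | p.1 = p.2} = 0 := by
  have hD : MeasurableSet {p : ℝ × ℝ | p.1 = p.2} :=
    (isClosed_eq continuous_fst continuous_snd).measurableSet
  have hvol : (volume : Measure (ℝ × ℝ)) {p : ℝ × ℝ | p.1 = p.2} = 0 := by
    rw [Measure.volume_eq_prod, Measure.prod_apply hD]
    have : ∀ x : ℝ, (volume : Measure ℝ) (Prod.mk x ⁻¹' {p : ℝ × ℝ | p.1 = p.2}) = 0 := by
      intro x
      have : (Prod.mk x ⁻¹' {p : ℝ × ℝ | p.1 = p.2}) = {x} := by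
        ext y; simp [eq_comm]
      rw [this]; exact measure_singleton x
    simp [this]
  exact setLIntegral_measure_zero _ _ hvol

lemma cov_lemma (γ R x : ℝ) :
    ∫⁻ y in Icc (x - R) (x + R), ENNReal.ofReal (|x - y| ^ (γ - 1))
      = ∫⁻ t in Icc (-R) R, ENNReal.ofReal (|t| ^ (γ - 1)) := by
  have h := (Measure.measurePreserving_sub_left (volume : Measure ℝ) x).setLIntegral_comp_emb
      (MeasurableEquiv.subLeft x).measurableEmbedding
      (fun y => ENNReal.ofReal (|x - y| ^ (γ - 1))) (Icc (-R) R)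
  simp only [MeasurableEquiv.subLeft, MeasurableEquiv.coe_mk, Equiv.subLeft_apply,
    sub_sub_cancel, Set.image_const_sub_Icc, sub_neg_eq_add] at h
  exact h.symm

lemma w_meas (γ : ℝ) : Measurable (fun p : ℝ × ℝ => ENNReal.ofReal (|p.1 - p.2| ^ (γ - 1))) := by
  apply ENNReal.measurable_ofReal.comp
  exact ((measurable_fst.sub measurable_snd).abs).pow measurable_const

lemma nuG_strip_lt_top {γ : ℝ} (hγ : 0 < γ) (a b R : ℝ) (hR : 0 ≤ R) :
    nuG γ {p : ℝ × ℝ | p.1 ∈ Icc a b ∧ |p.1 - p.2| ≤ R} < ⊤ := by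
  set w : ℝ × ℝ → ℝ≥0∞ := fun p => ENNReal.ofReal (|p.1 - p.2| ^ (γ - 1)) with hw
  set K := ∫⁻ t in Icc (0:ℝ) R, ENNReal.ofReal (|t| ^ (γ - 1)) with hKdef
  have hK : K < ⊤ := by
    have hint : IntegrableOn (fun t : ℝ => t ^ (γ - 1)) (Ioc 0 R) := by
      have h := intervalIntegral.intervalIntegrable_rpow' (show (-1:ℝ) < γ - 1 by linarith)
        (a := 0) (b := R)
      rw [intervalIntegrable_iff, uIoc_of_le hR] at h
      exact h
    have heq : K = ∫⁻ t in Ioc (0:ℝ) R, ENNReal.ofReal (t ^ (γ - 1)) := by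
      rw [hKdef, ← setLIntegral_congr (Ioc_ae_eq_Icc (μ := volume) (a := (0:ℝ)) (b := R))]
      refine setLIntegral_congr_fun measurableSet_Ioc (fun t ht => ?_)
      rw [abs_of_pos ht.1]
    rw [heq]
    exact hint.lintegral_lt_top
  have hKneg : ∫⁻ t in Icc (-R) (0:ℝ), ENNReal.ofReal (|t| ^ (γ - 1)) = K := by
    have h := (Measure.measurePreserving_neg (volume : Measure ℝ)).setLIntegral_comp_emb
      (MeasurableEquiv.neg ℝ).measurableEmbedding
      (fun t => ENNReal.ofReal (|t| ^ (γ - 1))) (Icc 0 R)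
    simp only [MeasurableEquiv.neg, MeasurableEquiv.coe_mk, Equiv.neg_apply, abs_neg] at h
    rw [show (Neg.neg '' Icc (0:ℝ) R) = Icc (-R) 0 by
      rw [Set.image_neg_eq_neg, Set.neg_Icc, neg_zero]] at h
    exact h.symm
  have hKfull : ∫⁻ t in Icc (-R) R, ENNReal.ofReal (|t| ^ (γ - 1)) < ⊤ := by
    calc ∫⁻ t in Icc (-R) R, ENNReal.ofReal (|t| ^ (γ - 1))
        ≤ ∫⁻ t in Icc (-R) 0 ∪ Icc 0 R, ENNReal.ofReal (|t| ^ (γ - 1)) := by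
          apply lintegral_mono_set
          intro t ht
          rcases le_total t 0 with h | h
          · exact Or.inl ⟨ht.1, h⟩
          · exact Or.inr ⟨h, ht.2⟩
      _ ≤ (∫⁻ t in Icc (-R) 0, ENNReal.ofReal (|t| ^ (γ - 1)))
            + ∫⁻ t in Icc (0:ℝ) R, ENNReal.ofReal (|t| ^ (γ - 1)) := lintegral_union_le _ _ _
      _ < ⊤ := by rw [hKneg]; exact ENNReal.add_lt_top.mpr ⟨hK, hK⟩
  set S' : Set (ℝ × ℝ) := {p : ℝ × ℝ | p.1 ∈ Icc a b ∧ |p.1 - p.2| ≤ R} with hS'def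
  have hS' : MeasurableSet S' := by
    apply MeasurableSet.inter
    · exact measurable_fst measurableSet_Icc
    · exact measurableSet_le ((measurable_fst.sub measurable_snd).abs) measurable_const
  have key : ∀ x : ℝ, ∫⁻ y, S'.indicator w (x, y) ≤
      (Icc a b).indicator (fun _ => ∫⁻ t in Icc (-R) R, ENNReal.ofReal (|t| ^ (γ - 1))) x := by
    intro x
    by_cases hx : x ∈ Icc a b
    · rw [Set.indicator_of_mem hx]
      calc ∫⁻ y, S'.indicator w (x, y)
          ≤ ∫⁻ y, (Icc (x - R) (x + R)).indicator
              (fun y => ENNReal.ofReal (|x - y| ^ (γ - 1))) y := by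
            apply lintegral_mono
            intro y
            show S'.indicator w (x, y) ≤ _
            by_cases hxy : (x, y) ∈ S'
            · rw [Set.indicator_of_mem hxy]
              have hy : y ∈ Icc (x - R) (x + R) := by
                have h2 := hxy.2
                rw [abs_le] at h2
                exact ⟨by linarith [h2.2], by linarith [h2.1]⟩
              rw [Set.indicator_of_mem hy]
            · rw [Set.indicator_of_notMem hxy]; exact zero_le
        _ = ∫⁻ y in Icc (x - R) (x + R), ENNReal.ofReal (|x - y| ^ (γ - 1)) :=
            lintegral_indicator measurableSet_Icc _
        _ = ∫⁻ t in Icc (-R) R, ENNReal.ofReal (|t| ^ (γ - 1)) := cov_lemma γ R x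
    · rw [Set.indicator_of_notMem hx]
      have : ∀ y, S'.indicator w (x, y) = 0 := fun y =>
        Set.indicator_of_notMem (fun h => hx h.1) _
      simp [this]
  calc nuG γ S' = ∫⁻ p, S'.indicator w p ∂volume := (lintegral_indicator hS' _).symm
    _ = ∫⁻ x, ∫⁻ y, S'.indicator w (x, y) := by
        rw [Measure.volume_eq_prod]
        exact lintegral_prod _ ((w_meas γ).indicator hS').aemeasurable
    _ ≤ ∫⁻ x, (Icc a b).indicator
          (fun _ => ∫⁻ t in Icc (-R) R, ENNReal.ofReal (|t| ^ (γ - 1))) x :=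
        lintegral_mono key
    _ = (∫⁻ t in Icc (-R) R, ENNReal.ofReal (|t| ^ (γ - 1))) * volume (Icc a b) := by
        rw [lintegral_indicator measurableSet_Icc, setLIntegral_const]
    _ < ⊤ := ENNReal.mul_lt_top hKfull (by rw [Real.volume_Icc]; exact ENNReal.ofReal_lt_top)


lemma bound01 {L₁ L₂ : ℝ} {f : ℝ → ℝ} (hf : Monotone f)
    (hf0 : ∀ x < L₁, f x = 0) (hf1 : ∀ x, L₂ < x → f x = 1) (x : ℝ) :
    0 ≤ f x ∧ f x ≤ 1 := by
  constructor
  · have h := hf (show min x L₁ - 1 ≤ x by have := min_le_left x L₁; linarith)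
    rwa [hf0 (min x L₁ - 1) (by have := min_le_right x L₁; linarith)] at h
  · have h := hf (show x ≤ max x L₂ + 1 by have := le_max_left x L₂; linarith)
    rwa [hf1 (max x L₂ + 1) (by have := le_max_right x L₂; linarith)] at h


/-- Let `γ > 0`, `0 < λ < λ₀ < ∞`, `L₁ ≤ L₂`, and let `f, f¹, f², … : ℝ → ℝ` be increasing
functions, each equal to `0` on `(-∞, L₁)` and to `1` on `(L₂, ∞)`, with `fⁱ → f` uniformly.
Then `λ ν_γ({|f(x)-f(y)| ≥ λ₀|x-y|^(1+γ)}) ≥ limsup_i λ ν_γ({|fⁱ(x)-fⁱ(y)| ≥ λ₀|x-y|^(1+γ)})`,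
and consequently `F_{γ,λ}(f,ℝ)` is at least this limsup. -/
theorem stmt12 (γ lam lam₀ : ℝ) (hγ : 0 < γ) (hlam : 0 < lam) (hlam₀ : lam < lam₀)
    (L₁ L₂ : ℝ) (hL : L₁ ≤ L₂)
    (f : ℝ → ℝ) (fi : ℕ → ℝ → ℝ)
    (hf : Monotone f) (hfi : ∀ i, Monotone (fi i))
    (hf0 : ∀ x < L₁, f x = 0) (hf1 : ∀ x, L₂ < x → f x = 1)
    (hfi0 : ∀ i, ∀ x < L₁, fi i x = 0) (hfi1 : ∀ i, ∀ x, L₂ < x → fi i x = 1)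
    (hconv : TendstoUniformly fi f Filter.atTop) :
    Filter.limsup (fun i : ℕ =>
        ENNReal.ofReal lam * nuG γ
          {p : ℝ × ℝ | lam₀ * |p.1 - p.2| ^ (1 + γ) ≤ |fi i p.1 - fi i p.2|}) Filter.atTop ≤
      ENNReal.ofReal lam * nuG γ
        {p : ℝ × ℝ | lam₀ * |p.1 - p.2| ^ (1 + γ) ≤ |f p.1 - f p.2|} ∧
    Filter.limsup (fun i : ℕ =>
        ENNReal.ofReal lam * nuG γ
          {p : ℝ × ℝ | lam₀ * |p.1 - p.2| ^ (1 + γ) ≤ |fi i p.1 - fi i p.2|}) Filter.atTop ≤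
      FG γ lam f Set.univ := by
  have hlamz : 0 < lam₀ := hlam.trans hlam₀
  have h1γ : (0:ℝ) < 1 + γ := by linarith
  set c : ℝ≥0∞ := ENNReal.ofReal lam with hc
  set R : ℝ := (1 / lam₀) ^ ((1 + γ)⁻¹) with hRdef
  have hR : 0 < R := Real.rpow_pos_of_pos (by positivity) _
  have hfm : Measurable f := hf.measurable
  set S : Set (ℝ × ℝ) :=
    {p | |p.1 - p.2| ≤ R ∧ L₁ ≤ max p.1 p.2 ∧ min p.1 p.2 ≤ L₂} with hSdef
  set A : Set (ℝ × ℝ) :=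
    {p : ℝ × ℝ | lam₀ * |p.1 - p.2| ^ (1 + γ) ≤ |f p.1 - f p.2|} with hAdef
  set C : ℕ → Set (ℝ × ℝ) := fun n =>
    {p : ℝ × ℝ | lam₀ * |p.1 - p.2| ^ (1 + γ) ≤ |f p.1 - f p.2| + 2 / (n + 1) ∧ p ∈ S}
    with hCdef
  have habs : Measurable (fun p : ℝ × ℝ => lam₀ * |p.1 - p.2| ^ (1 + γ)) :=
    (((measurable_fst.sub measurable_snd).abs).pow measurable_const).const_mul _
  have hgm : Measurable (fun p : ℝ × ℝ => |f p.1 - f p.2|) :=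
    ((hfm.comp measurable_fst).sub (hfm.comp measurable_snd)).abs
  have hSm : MeasurableSet S :=
    (measurableSet_le ((measurable_fst.sub measurable_snd).abs) measurable_const).inter
      ((measurableSet_le measurable_const (measurable_fst.max measurable_snd)).inter
        (measurableSet_le (measurable_fst.min measurable_snd) measurable_const))
  have hCm : ∀ n, MeasurableSet (C n) := fun n =>
    (measurableSet_le habs (hgm.add_const _)).inter hSm
  have hAm : MeasurableSet A := measurableSet_le habs hgm
  set w : ℝ × ℝ → ℝ≥0∞ := fun p => ENNReal.ofReal (|p.1 - p.2| ^ (γ - 1)) with hw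
  set μ : Measure (ℝ × ℝ) := volume.withDensity w with hμdef
  have hμ : ∀ {s : Set (ℝ × ℝ)}, MeasurableSet s → nuG γ s = μ s := fun hs =>
    (withDensity_apply w hs).symm
  have hb : ∀ i x, 0 ≤ fi i x ∧ fi i x ≤ 1 := fun i => bound01 (hfi i) (hfi0 i) (hfi1 i)
  -- Step 1
  have key1 : ∀ n : ℕ, ∀ᶠ i in atTop,
      nuG γ {p : ℝ × ℝ | lam₀ * |p.1 - p.2| ^ (1 + γ) ≤ |fi i p.1 - fi i p.2|}
        ≤ nuG γ (C n) := by
    intro n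
    have hεpos : (0:ℝ) < 1 / (n + 1) := by positivity
    filter_upwards [Metric.tendstoUniformly_iff.mp hconv (1 / (n + 1)) hεpos] with i hi
    have hsub : {p : ℝ × ℝ | lam₀ * |p.1 - p.2| ^ (1 + γ) ≤ |fi i p.1 - fi i p.2|}
        ⊆ {p : ℝ × ℝ | p.1 = p.2} ∪ C n := by
      intro p hp
      by_cases hpd : p.1 = p.2
      · exact Or.inl hpd
      right
      have hdpos : 0 < |p.1 - p.2| := abs_pos.mpr (sub_ne_zero.mpr hpd)
      have hpow : 0 < |p.1 - p.2| ^ (1 + γ) := Real.rpow_pos_of_pos hdpos _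
      have hp' : lam₀ * |p.1 - p.2| ^ (1 + γ) ≤ |fi i p.1 - fi i p.2| := hp
      have hfi_pos : 0 < |fi i p.1 - fi i p.2| := lt_of_lt_of_le (by positivity) hp'
      have d1 := hi p.1
      have d2 := hi p.2
      rw [Real.dist_eq] at d1 d2
      have hfib1 := hb i p.1
      have hfib2 := hb i p.2
      have htri : |fi i p.1 - fi i p.2| ≤ |f p.1 - f p.2| + 2 / (n + 1) := by
        have e1 : |fi i p.1 - f p.1| < 1 / (n + 1) := by rw [abs_sub_comm]; exact d1
        have h3 := abs_add_three (fi i p.1 - f p.1) (f p.1 - f p.2) (f p.2 - fi i p.2)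
        rw [show fi i p.1 - f p.1 + (f p.1 - f p.2) + (f p.2 - fi i p.2)
            = fi i p.1 - fi i p.2 by ring] at h3
        have : 1 / ((n:ℝ) + 1) + 1 / (n + 1) = 2 / (n + 1) := by ring
        linarith [h3, e1, d2]
      refine ⟨hp'.trans htri, ?_, ?_, ?_⟩
      · have hble : |fi i p.1 - fi i p.2| ≤ 1 :=
          abs_sub_le_iff.mpr ⟨by linarith [hfib1.2, hfib2.1], by linarith [hfib2.2, hfib1.1]⟩
        have h1 : lam₀ * |p.1 - p.2| ^ (1 + γ) ≤ 1 := hp'.trans hble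
        have h2 : |p.1 - p.2| ^ (1 + γ) ≤ 1 / lam₀ :=
          (le_div_iff₀ hlamz).mpr (by linarith [mul_comm lam₀ (|p.1 - p.2| ^ (1 + γ))])
        calc |p.1 - p.2| = (|p.1 - p.2| ^ (1 + γ)) ^ ((1 + γ)⁻¹) :=
              (Real.rpow_rpow_inv (abs_nonneg _) h1γ.ne').symm
          _ ≤ (1 / lam₀) ^ ((1 + γ)⁻¹) :=
              Real.rpow_le_rpow (by positivity) h2 (by positivity)
      · by_contra hcon
        push_neg at hcon
        rw [max_lt_iff] at hcon
        have e1 := hfi0 i p.1 hcon.1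
        have e2 := hfi0 i p.2 hcon.2
        rw [e1, e2] at hfi_pos
        simp at hfi_pos
      · by_contra hcon
        push_neg at hcon
        rw [lt_min_iff] at hcon
        have e1 := hfi1 i p.1 hcon.1
        have e2 := hfi1 i p.2 hcon.2
        rw [e1, e2] at hfi_pos
        simp at hfi_pos
    calc nuG γ {p : ℝ × ℝ | lam₀ * |p.1 - p.2| ^ (1 + γ) ≤ |fi i p.1 - fi i p.2|}
        ≤ nuG γ ({p : ℝ × ℝ | p.1 = p.2} ∪ C n) := nuG_mono hsub
      _ ≤ nuG γ {p : ℝ × ℝ | p.1 = p.2} + nuG γ (C n) := nuG_union_le _ _ _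
      _ = nuG γ (C n) := by rw [nuG_diag, zero_add]
  have hlimsup : ∀ n : ℕ,
      Filter.limsup (fun i : ℕ => c * nuG γ
        {p : ℝ × ℝ | lam₀ * |p.1 - p.2| ^ (1 + γ) ≤ |fi i p.1 - fi i p.2|}) atTop
        ≤ c * nuG γ (C n) := fun n =>
    limsup_le_of_le (by isBoundedDefault)
      ((key1 n).mono fun i hi => mul_le_mul_right hi c)
  have hanti : Antitone C := by
    intro m n hmn p hp
    refine ⟨hp.1.trans (add_le_add_right ?_ _), hp.2⟩
    have hcast : (m:ℝ) + 1 ≤ (n:ℝ) + 1 := by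
      have : (m:ℝ) ≤ n := Nat.cast_le.mpr hmn
      linarith
    gcongr
  have hμanti : Antitone fun n => μ (C n) := fun m n h => measure_mono (hanti h)
  have hfin : μ (C 0) ≠ ⊤ := by
    have hsub : C 0 ⊆ {p : ℝ × ℝ | p.1 ∈ Icc (L₁ - R) (L₂ + R) ∧ |p.1 - p.2| ≤ R} := by
      rintro p ⟨-, hd, h1, h2⟩
      have habs' := abs_le.mp hd
      rcases le_max_iff.mp h1 with h | h <;> rcases min_le_iff.mp h2 with h' | h' <;>
        exact ⟨⟨by linarith [habs'.1, habs'.2], by linarith [habs'.1, habs'.2]⟩, hd⟩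
    rw [← hμ (hCm 0)]
    exact ((nuG_mono hsub).trans_lt (nuG_strip_lt_top hγ _ _ R hR.le)).ne
  have hiInf := hanti.measure_iInter (μ := μ) (fun n => (hCm n).nullMeasurableSet) ⟨0, hfin⟩
  have hInterA : (⋂ n, C n) ⊆ A := by
    intro p hp
    simp only [mem_iInter] at hp
    show lam₀ * |p.1 - p.2| ^ (1 + γ) ≤ |f p.1 - f p.2|
    refine le_of_forall_pos_le_add fun ε hε => ?_
    obtain ⟨n, hn⟩ := exists_nat_gt (2 / ε)
    have hn1 : (0:ℝ) < (n:ℝ) + 1 := by positivity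
    have h2 : 2 < ((n:ℝ) + 1) * ε := by
      have := (div_lt_iff₀ hε).mp (hn.trans (lt_add_one _))
      linarith
    refine (hp n).1.trans (add_le_add_right ?_ _)
    rw [div_le_iff₀ hn1]
    linarith
  have htends : Tendsto (fun n => c * μ (C n)) atTop (𝓝 (c * μ (⋂ n, C n))) := by
    rw [hiInf]
    exact ENNReal.Tendsto.const_mul (tendsto_atTop_iInf hμanti) (Or.inr ENNReal.ofReal_ne_top)
  have hmain : Filter.limsup (fun i : ℕ => c * nuG γ
      {p : ℝ × ℝ | lam₀ * |p.1 - p.2| ^ (1 + γ) ≤ |fi i p.1 - fi i p.2|}) atTop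
      ≤ c * μ (⋂ n, C n) :=
    ge_of_tendsto htends (Eventually.of_forall fun n =>
      (hlimsup n).trans_eq (by rw [hμ (hCm n)]))
  have h1 : Filter.limsup (fun i : ℕ => c * nuG γ
      {p : ℝ × ℝ | lam₀ * |p.1 - p.2| ^ (1 + γ) ≤ |fi i p.1 - fi i p.2|}) atTop
      ≤ c * nuG γ A := by
    refine hmain.trans (mul_le_mul_right ?_ c)
    rw [hμ hAm]
    exact measure_mono hInterA
  refine ⟨h1, h1.trans ?_⟩
  rw [FG]
  apply mul_le_mul_right
  have hsub2 : A ⊆ EG γ lam f univ ∪ {p : ℝ × ℝ | p.1 = p.2} := by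
    intro p hp
    by_cases hpd : p.1 = p.2
    · exact Or.inr hpd
    · left
      have hpow : 0 < |p.1 - p.2| ^ (1 + γ) :=
        Real.rpow_pos_of_pos (abs_pos.mpr (sub_ne_zero.mpr hpd)) _
      have hp' : lam₀ * |p.1 - p.2| ^ (1 + γ) ≤ |f p.1 - f p.2| := hp
      exact ⟨mem_univ _, mem_univ _,
        lt_of_lt_of_le (by nlinarith) hp'⟩
  calc nuG γ A ≤ nuG γ (EG γ lam f univ ∪ {p : ℝ × ℝ | p.1 = p.2}) := nuG_mono hsub2
    _ ≤ nuG γ (EG γ lam f univ) + nuG γ {p : ℝ × ℝ | p.1 = p.2} := nuG_union_le _ _ _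
    _ = nuG γ (EG γ lam f univ) := by rw [nuG_diag, add_zero]
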